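/- Let 0 ≤ β < 1/2 and let f be analytic on D with f(0)=0, f'(0)=1, f''(0)=0, and Re f'(z) > β for all z ∈ D. Then |f'(z)| ≤ (1+(1-2β)|z|²)/(1-|z|²) for all z ∈ D, and consequently sup_{z∈D} (1-|z|²)|f'(z)| ≤ 2(1-β). -/

import Mathlib

open Complex Metric Set

theorem stmt_7 (β : ℝ) (hβ0 : 0 ≤ β) (hβ1 : β < 1/2)
    (f : ℂ → ℂ) (hf : DifferentiableOn ℂ f (ball (0:ℂ) 1)) (hf0 : f 0 = 0)
    (hf'0 : deriv f 0 = 1) (hf''0 : iteratedDeriv 2 f 0 = 0)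
    (hre : ∀ z ∈ ball (0:ℂ) 1, β < (deriv f z).re) :
    (∀ z ∈ ball (0:ℂ) 1,
      ‖deriv f z‖ ≤ (1 + (1 - 2*β) * ‖z‖^2) / (1 - ‖z‖^2)) ∧
    (∀ z ∈ ball (0:ℂ) 1,
      (1 - ‖z‖^2) * ‖deriv f z‖ ≤ 2 * (1 - β)) := by
  have h01 : (0:ℂ) ∈ ball (0:ℂ) 1 := mem_ball_self one_pos
  set g := deriv f with hg
  have hgan : AnalyticOnNhd ℂ g (ball (0:ℂ) 1) := (hf.analyticOnNhd isOpen_ball).deriv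
  have hgd : DifferentiableOn ℂ g (ball (0:ℂ) 1) := fun z hz =>
    (hgan z hz).differentiableAt.differentiableWithinAt
  have hg'0 : deriv g 0 = 0 := by
    have h2 : iteratedDeriv 2 f = deriv (deriv f) := by
      rw [iteratedDeriv_succ, iteratedDeriv_one]
    rw [h2] at hf''0
    exact hf''0
  set c : ℂ := ((1 - 2*β : ℝ) : ℂ) with hc
  have hden : ∀ z ∈ ball (0:ℂ) 1, g z + c ≠ 0 := by
    intro z hz h
    have h1 : β < (g z).re := hre z hz
    have h2 : (g z + c).re = (g z).re + (1 - 2*β) := by simp [hc]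
    rw [h] at h2
    simp at h2
    linarith
  set φ : ℂ → ℂ := fun z => (g z - 1) / (g z + c) with hφ
  have hφd : DifferentiableOn ℂ φ (ball (0:ℂ) 1) :=
    (hgd.sub_const 1).div (hgd.add_const c) hden
  have hφ0 : φ 0 = 0 := by
    have : g 0 = 1 := hf'0
    simp only [hφ, this]
    simp
  have hφmaps : MapsTo φ (ball (0:ℂ) 1) (ball (0:ℂ) 1) := by
    intro z hz
    rw [mem_ball_zero_iff]
    have h1 : β < (g z).re := hre z hz
    have hsq : (‖g z - 1‖)^2 < (‖g z + c‖)^2 := by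
      rw [Complex.sq_norm, Complex.sq_norm, Complex.normSq_apply, Complex.normSq_apply]
      simp only [Complex.sub_re, Complex.sub_im, Complex.add_re, Complex.add_im,
        Complex.one_re, Complex.one_im, hc, Complex.ofReal_re, Complex.ofReal_im]
      nlinarith [mul_pos (sub_pos.mpr h1) (by linarith : (0:ℝ) < 1 - β)]
    have hlt : ‖g z - 1‖ < ‖g z + c‖ := by
      nlinarith [norm_nonneg (g z - 1), norm_nonneg (g z + c)]
    have hpos : 0 < ‖g z + c‖ :=
      norm_pos_iff.mpr (hden z hz)
    rw [hφ]
    simp only [norm_div]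
    exact (div_lt_one hpos).mpr hlt
  have hφmaps' : MapsTo φ (ball (0:ℂ) 1) (ball (φ 0) 1) := by rw [hφ0]; exact hφmaps
  -- deriv φ 0 = 0
  have hgda : HasDerivAt g 0 0 := by
    have := (hgan 0 h01).differentiableAt.hasDerivAt
    rwa [hg'0] at this
  have hg0 : g 0 = 1 := hf'0
  have hφ'0 : deriv φ 0 = 0 := by
    have hdiv : HasDerivAt φ ((0 * (g 0 + c) - (g 0 - 1) * 0) / (g 0 + c)^2) 0 :=
      (hgda.sub_const 1).div (hgda.add_const c) (hden 0 h01)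
    have := hdiv.deriv
    simpa using this
  set ψ : ℂ → ℂ := dslope φ 0 with hψ
  have hψd : DifferentiableOn ℂ ψ (ball (0:ℂ) 1) :=
    (differentiableOn_dslope (isOpen_ball.mem_nhds h01)).mpr hφd
  have hψ0 : ψ 0 = 0 := by rw [hψ, dslope_same, hφ'0]
  have hψle : ∀ z ∈ ball (0:ℂ) 1, ‖ψ z‖ ≤ 1 := by
    intro z hz
    have := Complex.norm_dslope_le_div_of_mapsTo_ball hφd (hφmaps'.mono_right ball_subset_closedBall) hz
    simpa using this
  have hψlt : ∀ z ∈ ball (0:ℂ) 1, ‖ψ z‖ < 1 := by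
    intro z hz
    rcases lt_or_eq_of_le (hψle z hz) with h | h
    · exact h
    · exfalso
      have heq := Complex.affine_of_mapsTo_ball_of_exists_norm_dslope_eq_div hφd (hφmaps'.mono_right ball_subset_closedBall) hz
        (by rw [h]; norm_num)
      have hev : φ =ᶠ[nhds 0] (fun w => φ 0 + (w - 0) • dslope φ 0 z) :=
        heq.eventuallyEq_of_mem (isOpen_ball.mem_nhds h01)
      have hder : HasDerivAt (fun w : ℂ => φ 0 + (w - 0) • dslope φ 0 z)
          (dslope φ 0 z) 0 := by
        have h' : HasDerivAt (fun w : ℂ => φ 0 + (w - 0) * dslope φ 0 z)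
            (1 * dslope φ 0 z) 0 :=
          (((hasDerivAt_id (0:ℂ)).sub_const 0).mul_const (dslope φ 0 z)).const_add (φ 0)
        simpa [smul_eq_mul] using h'
      have : deriv φ 0 = dslope φ 0 z := by
        rw [hev.deriv_eq, hder.deriv]
      rw [hφ'0] at this
      rw [hψ] at h
      rw [← this] at h
      simp at h
  have hψmaps : MapsTo ψ (ball (0:ℂ) 1) (ball (ψ 0) 1) := by
    rw [hψ0]
    intro z hz
    rw [mem_ball_zero_iff]
    exact hψlt z hz
  have hψz : ∀ z ∈ ball (0:ℂ) 1, ‖ψ z‖ ≤ ‖z‖ := by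
    intro z hz
    have := Complex.dist_le_div_mul_dist_of_mapsTo_ball hψd (hψmaps.mono_right ball_subset_closedBall) hz
    simpa [hψ0, dist_zero_right] using this
  have hφle : ∀ z ∈ ball (0:ℂ) 1, ‖φ z‖ ≤ ‖z‖^2 := by
    intro z hz
    have h1 : (z - 0) • ψ z = φ z - φ 0 := sub_smul_dslope φ 0 z
    rw [hφ0, sub_zero, sub_zero, smul_eq_mul] at h1
    rw [← h1, norm_mul]
    have h2 : ‖ψ z‖ ≤ ‖z‖ := by
      exact hψz z hz
    have := norm_nonneg z
    nlinarith [norm_nonneg (ψ z)]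
  -- main bound
  have main : ∀ z ∈ ball (0:ℂ) 1,
      ‖g z‖ ≤ (1 + (1 - 2*β) * ‖z‖^2) / (1 - ‖z‖^2) := by
    intro z hz
    have hzlt : ‖z‖ < 1 := by simpa [mem_ball_zero_iff] using hz
    set s := ‖z‖^2 with hs
    have hs1 : s < 1 := by nlinarith [norm_nonneg z]
    set t := ‖φ z‖ with ht
    have hts : t ≤ s := hφle z hz
    have ht0 : 0 ≤ t := norm_nonneg _
    have key : g z * (1 - φ z) = 1 + c * φ z := by
      have hne := hden z hz
      rw [hφ]
      field_simp
      ring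
    have habs : ‖g z‖ * ‖1 - φ z‖ = ‖1 + c * φ z‖ := by
      rw [← norm_mul, key]
    have h1 : 1 - t ≤ ‖1 - φ z‖ := by
      have := norm_sub_norm_le (1:ℂ) (φ z)
      simpa using this
    have h2 : ‖1 + c * φ z‖ ≤ 1 + (1 - 2*β) * t := by
      calc ‖1 + c * φ z‖ ≤ ‖(1:ℂ)‖ + ‖c * φ z‖ :=
            norm_add_le _ _
        _ = 1 + (1 - 2*β) * t := by
            rw [norm_one, norm_mul, hc, Complex.norm_real, Real.norm_eq_abs, abs_of_pos (by linarith)]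
    have ha0 : 0 ≤ ‖g z‖ := norm_nonneg _
    have hkey : ‖g z‖ * (1 - t) ≤ 1 + (1 - 2*β) * t := by
      calc ‖g z‖ * (1 - t) ≤ ‖g z‖ * ‖1 - φ z‖ :=
            mul_le_mul_of_nonneg_left h1 ha0
        _ = ‖1 + c * φ z‖ := habs
        _ ≤ 1 + (1 - 2*β) * t := h2
    rw [le_div_iff₀ (by linarith : (0:ℝ) < 1 - s)]
    nlinarith [mul_le_mul_of_nonneg_left hts ha0]
  constructor
  · exact main
  · intro z hz
    have hzlt : ‖z‖ < 1 := by simpa [mem_ball_zero_iff] using hz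
    have hs1 : ‖z‖^2 < 1 := by nlinarith [norm_nonneg z]
    have := main z hz
    rw [le_div_iff₀ (by linarith : (0:ℝ) < 1 - ‖z‖^2)] at this
    nlinarith [norm_nonneg z, sq_nonneg ‖z‖]
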